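/- In Ĥ, the subgroup generated by {a, b} is isomorphic to the discrete Heisenberg group 𝓗 = ⟨a, b ∣ [a,[a,b]] = [b,[a,b]] = 1⟩ and has index 2 in Ĥ. -/

import Mathlib

open scoped commutatorElement

/-- The two generators `a, b` of the discrete Heisenberg group. -/
inductive HGen : Type
  | a | b
deriving DecidableEq

/-- Relators of the discrete Heisenberg group `⟨a,b ∣ [a,[a,b]] = [b,[a,b]] = 1⟩`. -/
def Hrels : Set (FreeGroup HGen) :=
  { ⁅FreeGroup.of HGen.a, ⁅FreeGroup.of HGen.a, FreeGroup.of HGen.b⁆⁆,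
    ⁅FreeGroup.of HGen.b, ⁅FreeGroup.of HGen.a, FreeGroup.of HGen.b⁆⁆ }

/-- The discrete Heisenberg group `𝓗`. -/
abbrev Heis : Type := PresentedGroup Hrels

/-- The generator `a` of `𝓗`. -/
def Ha : Heis := PresentedGroup.of HGen.a

/-- The generator `b` of `𝓗`. -/
def Hb : Heis := PresentedGroup.of HGen.b

/-- The four letters of the alphabet `X = {a, a⁻¹, b, b⁻¹}`. -/
inductive XLetter : Type
  | a | A | b | B
deriving DecidableEq

/-- The element of `𝓗` represented by a letter of `X`. -/
def XLetter.toH : XLetter → Heis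
  | .a => Ha
  | .A => Ha⁻¹
  | .b => Hb
  | .B => Hb⁻¹

/-- The element of `𝓗` represented by a word over `X`. -/
def evalX (w : List XLetter) : Heis := (w.map XLetter.toH).prod

/-- The word `a^k` over `X`, for `k ∈ ℤ`. -/
def apow (k : ℤ) : List XLetter :=
  if 0 ≤ k then List.replicate k.toNat XLetter.a else List.replicate (-k).toNat XLetter.A

/-- The word `b^k` over `X`, for `k ∈ ℤ`. -/
def bpow (k : ℤ) : List XLetter :=
  if 0 ≤ k then List.replicate k.toNat XLetter.b else List.replicate (-k).toNat XLetter.B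

/-- The element `(x,y,z)` of `𝓗`, i.e. the element with normal form `[a,b]^z b^y a^x`. -/
def hElt (x y z : ℤ) : Heis := ⁅Ha, Hb⁆ ^ z * Hb ^ y * Ha ^ x

/-- The word length `ℓ_X(g)` of `g ∈ 𝓗` with respect to `X`. -/
noncomputable def lenX (g : Heis) : ℕ :=
  sInf { n | ∃ w : List XLetter, evalX w = g ∧ w.length = n }

/-- A word over `X` is geodesic if its length equals the word length of the
element it represents. -/
def IsGeodesicX (w : List XLetter) : Prop := w.length = lenX (evalX w)

/-- The three generators `a, b, t` of the virtually Heisenberg group `Ĥ`. -/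
inductive VGen : Type
  | a | b | t
deriving DecidableEq

/-- Relators of the virtually Heisenberg group
`Ĥ = ⟨a,b,t ∣ [a,[a,b]] = [b,[a,b]] = t² = 1, tat = b⟩`. -/
def VRels : Set (FreeGroup VGen) :=
  { ⁅FreeGroup.of VGen.a, ⁅FreeGroup.of VGen.a, FreeGroup.of VGen.b⁆⁆,
    ⁅FreeGroup.of VGen.b, ⁅FreeGroup.of VGen.a, FreeGroup.of VGen.b⁆⁆,
    FreeGroup.of VGen.t ^ 2,
    FreeGroup.of VGen.t * FreeGroup.of VGen.a * FreeGroup.of VGen.t *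
      (FreeGroup.of VGen.b)⁻¹ }

/-- The virtually Heisenberg group `Ĥ`. -/
abbrev VH : Type := PresentedGroup VRels

/-- The generator `a` of `Ĥ`. -/
def Va : VH := PresentedGroup.of VGen.a

/-- The generator `b` of `Ĥ`. -/
def Vb : VH := PresentedGroup.of VGen.b

/-- The generator `t` of `Ĥ`. -/
def Vt : VH := PresentedGroup.of VGen.t

/-- The three letters of the alphabet `S = {a, a⁻¹, t}`. -/
inductive SLetter : Type
  | a | A | t
deriving DecidableEq

/-- The element of `Ĥ` represented by a letter of `S`. -/
def SLetter.toV : SLetter → VH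
  | .a => Va
  | .A => Va⁻¹
  | .t => Vt

/-- The element of `Ĥ` represented by a word over `S`. -/
def evalS (w : List SLetter) : VH := (w.map SLetter.toV).prod

/-- The word `a^k` over `S`, for `k ∈ ℤ`. -/
def apowS (k : ℤ) : List SLetter :=
  if 0 ≤ k then List.replicate k.toNat SLetter.a else List.replicate (-k).toNat SLetter.A

/-- The word length `ℓ_S(g)` of `g ∈ Ĥ` with respect to `S`. -/
noncomputable def lenS (g : VH) : ℕ :=
  sInf { n | ∃ w : List SLetter, evalS w = g ∧ w.length = n }

/-- A word over `S` is geodesic if its length equals the word length of the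
element it represents. -/
def IsGeodesicS (w : List SLetter) : Prop := w.length = lenS (evalS w)

namespace VHAux



@[ext] structure K : Type where
  x : ℤ
  y : ℤ
  z : ℤ

namespace K

instance : Mul K := ⟨fun p q => ⟨p.x + q.x, p.y + q.y, p.z + q.z + p.x * q.y⟩⟩
instance : One K := ⟨⟨0, 0, 0⟩⟩
instance : Inv K := ⟨fun p => ⟨-p.x, -p.y, p.x * p.y - p.z⟩⟩

@[simp] lemma mul_x (p q : K) : (p * q).x = p.x + q.x := rfl
@[simp] lemma mul_y (p q : K) : (p * q).y = p.y + q.y := rfl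
@[simp] lemma mul_z (p q : K) : (p * q).z = p.z + q.z + p.x * q.y := rfl
@[simp] lemma one_x : (1 : K).x = 0 := rfl
@[simp] lemma one_y : (1 : K).y = 0 := rfl
@[simp] lemma one_z : (1 : K).z = 0 := rfl
@[simp] lemma inv_x (p : K) : p⁻¹.x = -p.x := rfl
@[simp] lemma inv_y (p : K) : p⁻¹.y = -p.y := rfl
@[simp] lemma inv_z (p : K) : p⁻¹.z = p.x * p.y - p.z := rfl

instance : Group K where
  mul_assoc a b c := by ext <;> simp <;> ring
  one_mul a := by ext <;> simp
  mul_one a := by ext <;> simp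
  inv_mul_cancel a := by ext <;> simp

def A : K := ⟨1, 0, 0⟩
def B : K := ⟨0, 1, 0⟩
def C : K := ⟨0, 0, 1⟩

lemma commAB : ⁅A, B⁆ = C := by
  ext <;> simp [commutatorElement_def, A, B, C]

lemma A_zpow (n : ℤ) : A ^ n = ⟨n, 0, 0⟩ := by
  induction n using Int.induction_on with
  | zero => rfl
  | succ k ih => rw [zpow_add_one, ih]; ext <;> simp [A]
  | pred k ih => rw [zpow_sub_one, ih]; ext <;> simp [A] <;> ring

lemma B_zpow (n : ℤ) : B ^ n = ⟨0, n, 0⟩ := by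
  induction n using Int.induction_on with
  | zero => rfl
  | succ k ih => rw [zpow_add_one, ih]; ext <;> simp [B]
  | pred k ih => rw [zpow_sub_one, ih]; ext <;> simp [B] <;> ring

lemma C_zpow (n : ℤ) : C ^ n = ⟨0, 0, n⟩ := by
  induction n using Int.induction_on with
  | zero => rfl
  | succ k ih => rw [zpow_add_one, ih]; ext <;> simp [C]
  | pred k ih => rw [zpow_sub_one, ih]; ext <;> simp [C] <;> ring

lemma rel1 : ⁅A, ⁅A, B⁆⁆ = 1 := by
  ext <;> simp [commutatorElement_def, A, B]

lemma rel2 : ⁅B, ⁅A, B⁆⁆ = 1 := by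
  ext <;> simp [commutatorElement_def, A, B]

/-- the swap automorphism -/
def tau : MulAut K where
  toFun p := ⟨p.y, p.x, p.x * p.y - p.z⟩
  invFun p := ⟨p.y, p.x, p.x * p.y - p.z⟩
  left_inv p := by ext <;> simp <;> ring
  right_inv p := by ext <;> simp <;> ring
  map_mul' p q := by ext <;> simp <;> ring

@[simp] lemma tau_apply (p : K) : tau p = ⟨p.y, p.x, p.x * p.y - p.z⟩ := rfl

lemma tau_mul_tau : tau * tau = 1 := by
  apply MulEquiv.ext
  intro p
  ext <;> simp [MulAut.mul_apply] <;> ring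

lemma tau_A : tau A = B := by ext <;> simp [A, B]
lemma tau_B : tau B = A := by ext <;> simp [A, B]

end K

open K in
def phi : Multiplicative (ZMod 2) →* MulAut K where
  toFun m := if m = 1 then 1 else tau
  map_one' := if_pos rfl
  map_mul' m n := by
    have h : ∀ u : Multiplicative (ZMod 2), u = 1 ∨ u = Multiplicative.ofAdd 1 := by decide
    have hne : (Multiplicative.ofAdd (1 : ZMod 2)) ≠ 1 := by decide
    have hmm : (Multiplicative.ofAdd (1 : ZMod 2)) * Multiplicative.ofAdd (1 : ZMod 2) = 1 := by
      decide
    rcases h m with rfl | rfl <;> rcases h n with rfl | rfl <;>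
      simp [hne, hmm, tau_mul_tau]

@[simp] lemma phi_uu' : phi (Multiplicative.ofAdd (1 : ZMod 2)) = K.tau := by
  have hne : (Multiplicative.ofAdd (1 : ZMod 2)) ≠ 1 := by decide
  simp [phi, hne]

abbrev G := K ⋊[phi] Multiplicative (ZMod 2)


lemma presented_rel {α : Type*} {rels : Set (FreeGroup α)} {r : FreeGroup α} (hr : r ∈ rels) :
    PresentedGroup.mk rels r = 1 :=
  (QuotientGroup.eq_one_iff _).mpr (Subgroup.subset_normalClosure hr)

/-! ### Basic relations in `Heis` -/

noncomputable def Hc : Heis := ⁅Ha, Hb⁆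

lemma Hrel1 : ⁅Ha, Hc⁆ = 1 := by
  have := presented_rel (rels := Hrels)
    (r := ⁅FreeGroup.of HGen.a, ⁅FreeGroup.of HGen.a, FreeGroup.of HGen.b⁆⁆)
    (by left; rfl)
  simpa [map_commutatorElement, Hc, Ha, Hb, PresentedGroup.of] using this

lemma Hrel2 : ⁅Hb, Hc⁆ = 1 := by
  have := presented_rel (rels := Hrels)
    (r := ⁅FreeGroup.of HGen.b, ⁅FreeGroup.of HGen.a, FreeGroup.of HGen.b⁆⁆)
    (by right; rfl)
  simpa [map_commutatorElement, Hc, Ha, Hb, PresentedGroup.of] using this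

lemma comm_a_c : Commute Ha Hc := commutatorElement_eq_one_iff_commute.mp Hrel1
lemma comm_b_c : Commute Hb Hc := commutatorElement_eq_one_iff_commute.mp Hrel2

lemma hab : Ha * Hb = Hc * Hb * Ha := by
  simp only [Hc, commutatorElement_def]
  group

lemma ha_zpow_hb (n : ℤ) : Ha ^ n * Hb = Hc ^ n * Hb * Ha ^ n := by
  induction n using Int.induction_on with
  | zero => simp
  | succ k ih =>
    have hcom : Ha ^ (k : ℤ) * Hc = Hc * Ha ^ (k : ℤ) := (comm_a_c.zpow_left k).eq
    calc Ha ^ ((k : ℤ) + 1) * Hb = Ha ^ (k : ℤ) * (Ha * Hb) := by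
          rw [zpow_add_one]; group
      _ = Ha ^ (k : ℤ) * Hc * Hb * Ha := by rw [hab]; group
      _ = Hc * (Ha ^ (k : ℤ) * Hb) * Ha := by rw [hcom]; group
      _ = Hc * (Hc ^ (k : ℤ) * Hb * Ha ^ (k : ℤ)) * Ha := by rw [ih]
      _ = Hc ^ ((k : ℤ) + 1) * Hb * Ha ^ ((k : ℤ) + 1) := by
          rw [zpow_add_one, zpow_add_one]; group
  | pred k ih =>
    -- first : Ha⁻¹ * Hb = Hc⁻¹ * Hb * Ha⁻¹
    have hinv : Ha⁻¹ * Hb = Hc⁻¹ * Hb * Ha⁻¹ := by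
      have h1 : Hb * Ha⁻¹ = Ha⁻¹ * Hc * Hb := by
        have := hab
        calc Hb * Ha⁻¹ = Ha⁻¹ * (Ha * Hb) * Ha⁻¹ * Hb⁻¹ * Hb := by group
          _ = Ha⁻¹ * (Hc * Hb * Ha) * Ha⁻¹ * Hb⁻¹ * Hb := by rw [this]
          _ = Ha⁻¹ * Hc * Hb := by group
      have h2 : Ha⁻¹ * Hc = Hc * Ha⁻¹ := (comm_a_c.inv_left).eq
      calc Ha⁻¹ * Hb = Hc⁻¹ * (Hc * Ha⁻¹ * Hb) := by group
        _ = Hc⁻¹ * (Ha⁻¹ * Hc * Hb) := by rw [← h2]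
        _ = Hc⁻¹ * (Hb * Ha⁻¹) := by rw [← h1]
        _ = Hc⁻¹ * Hb * Ha⁻¹ := by group
    have hcom : Ha ^ (-(k : ℤ)) * Hc⁻¹ = Hc⁻¹ * Ha ^ (-(k : ℤ)) :=
      ((comm_a_c.zpow_left _).inv_right).eq
    calc Ha ^ (-(k : ℤ) - 1) * Hb = Ha ^ (-(k : ℤ)) * (Ha⁻¹ * Hb) := by
          rw [zpow_sub_one]; group
      _ = Ha ^ (-(k : ℤ)) * Hc⁻¹ * Hb * Ha⁻¹ := by rw [hinv]; group
      _ = Hc⁻¹ * (Ha ^ (-(k : ℤ)) * Hb) * Ha⁻¹ := by rw [hcom]; group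
      _ = Hc⁻¹ * (Hc ^ (-(k : ℤ)) * Hb * Ha ^ (-(k : ℤ))) * Ha⁻¹ := by rw [ih]
      _ = Hc ^ (-(k : ℤ) - 1) * Hb * Ha ^ (-(k : ℤ) - 1) := by
          rw [zpow_sub_one, zpow_sub_one]; group

lemma ha_zpow_hb_inv (n : ℤ) : Ha ^ n * Hb⁻¹ = Hc ^ (-n) * Hb⁻¹ * Ha ^ n := by
  have h := ha_zpow_hb n
  have hc : Hb⁻¹ * Hc ^ (-n) = Hc ^ (-n) * Hb⁻¹ := ((comm_b_c.zpow_right _).inv_left).eq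
  have e1 : Ha ^ n = Hc ^ n * Hb * Ha ^ n * Hb⁻¹ := by rw [← h]; group
  calc Ha ^ n * Hb⁻¹ = Hb⁻¹ * (Hc ^ (-n) * (Hc ^ n * Hb * Ha ^ n * Hb⁻¹)) := by group
    _ = Hb⁻¹ * (Hc ^ (-n) * Ha ^ n) := by rw [← e1]
    _ = (Hb⁻¹ * Hc ^ (-n)) * Ha ^ n := by group
    _ = Hc ^ (-n) * Hb⁻¹ * Ha ^ n := by rw [hc]

lemma hElt_def (x y z : ℤ) : hElt x y z = Hc ^ z * Hb ^ y * Ha ^ x := rfl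

lemma hElt_mul_a (x y z : ℤ) : hElt x y z * Ha = hElt (x + 1) y z := by
  rw [hElt_def, hElt_def, zpow_add_one]; group

lemma hElt_mul_a_inv (x y z : ℤ) : hElt x y z * Ha⁻¹ = hElt (x - 1) y z := by
  rw [hElt_def, hElt_def, zpow_sub_one]; group

lemma hElt_mul_b (x y z : ℤ) : hElt x y z * Hb = hElt x (y + 1) (z + x) := by
  have hc : Hb ^ y * Hc ^ x = Hc ^ x * Hb ^ y := ((comm_b_c.zpow_left y).zpow_right x).eq
  calc hElt x y z * Hb = Hc ^ z * Hb ^ y * (Ha ^ x * Hb) := by rw [hElt_def]; group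
    _ = Hc ^ z * (Hb ^ y * Hc ^ x) * Hb * Ha ^ x := by rw [ha_zpow_hb]; group
    _ = Hc ^ z * (Hc ^ x * Hb ^ y) * Hb * Ha ^ x := by rw [hc]
    _ = hElt x (y + 1) (z + x) := by rw [hElt_def, zpow_add, zpow_add_one]; group

lemma hElt_mul_b_inv (x y z : ℤ) : hElt x y z * Hb⁻¹ = hElt x (y - 1) (z - x) := by
  have hc : Hb ^ y * Hc ^ (-x) = Hc ^ (-x) * Hb ^ y := ((comm_b_c.zpow_left y).zpow_right _).eq
  calc hElt x y z * Hb⁻¹ = Hc ^ z * Hb ^ y * (Ha ^ x * Hb⁻¹) := by rw [hElt_def]; group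
    _ = Hc ^ z * (Hb ^ y * Hc ^ (-x)) * Hb⁻¹ * Ha ^ x := by rw [ha_zpow_hb_inv]; group
    _ = Hc ^ z * (Hc ^ (-x) * Hb ^ y) * Hb⁻¹ * Ha ^ x := by rw [hc]
    _ = hElt x (y - 1) (z - x) := by rw [hElt_def, zpow_sub, zpow_sub_one]; group

lemma heis_form (g : Heis) : ∃ x y z : ℤ, g = hElt x y z := by
  have hg : g ∈ Subgroup.closure (Set.range (PresentedGroup.of : HGen → Heis)) := by
    rw [PresentedGroup.closure_range_of]; trivial
  refine Subgroup.closure_induction_right ?_ ?_ ?_ hg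
  · exact ⟨0, 0, 0, by simp [hElt]⟩
  · rintro w hw v ⟨u, rfl⟩ ⟨x, y, z, rfl⟩
    cases u
    · exact ⟨x + 1, y, z, hElt_mul_a x y z⟩
    · exact ⟨x, y + 1, z + x, hElt_mul_b x y z⟩
  · rintro w hw v ⟨u, rfl⟩ ⟨x, y, z, rfl⟩
    cases u
    · exact ⟨x - 1, y, z, hElt_mul_a_inv x y z⟩
    · exact ⟨x, y - 1, z - x, hElt_mul_b_inv x y z⟩

/-! ### The homomorphism `θ : Heis →* K` -/

def fH : HGen → K
  | .a => K.A
  | .b => K.B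

lemma fH_rels : ∀ r ∈ Hrels, FreeGroup.lift fH r = 1 := by
  intro r hr
  simp only [Hrels, Set.mem_insert_iff, Set.mem_singleton_iff] at hr
  rcases hr with rfl | rfl <;>
    simp [map_commutatorElement, fH, K.rel1, K.rel2]

noncomputable def theta : Heis →* K := PresentedGroup.toGroup fH_rels

@[simp] lemma theta_a : theta Ha = K.A := PresentedGroup.toGroup.of fH_rels
@[simp] lemma theta_b : theta Hb = K.B := PresentedGroup.toGroup.of fH_rels

lemma theta_hElt (x y z : ℤ) : theta (hElt x y z) = ⟨x, y, z⟩ := by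
  rw [hElt_def, map_mul, map_mul, map_zpow, map_zpow, map_zpow, Hc, map_commutatorElement,
    theta_a, theta_b, K.commAB, K.A_zpow, K.B_zpow, K.C_zpow]
  ext <;> simp

lemma theta_inj : Function.Injective theta := by
  intro g g' h
  obtain ⟨x, y, z, rfl⟩ := heis_form g
  obtain ⟨x', y', z', rfl⟩ := heis_form g'
  rw [theta_hElt, theta_hElt, K.mk.injEq] at h
  obtain ⟨rfl, rfl, rfl⟩ := h
  rfl

/-! ### Basic relations in `VH` -/

lemma Vt_sq : Vt * Vt = 1 := by
  have := presented_rel (rels := VRels) (r := FreeGroup.of VGen.t ^ 2)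
    (by right; right; left; rfl)
  simpa [pow_two, Vt, PresentedGroup.of] using this

lemma Vt_inv : Vt⁻¹ = Vt := by
  rw [inv_eq_iff_mul_eq_one, Vt_sq]

lemma Vtat : Vt * Va * Vt = Vb := by
  have := presented_rel (rels := VRels)
    (r := FreeGroup.of VGen.t * FreeGroup.of VGen.a * FreeGroup.of VGen.t *
      (FreeGroup.of VGen.b)⁻¹)
    (by right; right; right; rfl)
  have h : Vt * Va * Vt * Vb⁻¹ = 1 := by simpa [Vt, Va, Vb, PresentedGroup.of] using this
  calc Vt * Va * Vt = Vt * Va * Vt * Vb⁻¹ * Vb := by group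
    _ = Vb := by rw [h]; group

lemma Vtbt : Vt * Vb * Vt = Va := by
  calc Vt * Vb * Vt = Vt * (Vt * Va * Vt) * Vt := by rw [Vtat]
    _ = (Vt * Vt) * Va * (Vt * Vt) := by group
    _ = Va := by rw [Vt_sq]; group

lemma Vrel1 : ⁅Va, ⁅Va, Vb⁆⁆ = 1 := by
  have := presented_rel (rels := VRels)
    (r := ⁅FreeGroup.of VGen.a, ⁅FreeGroup.of VGen.a, FreeGroup.of VGen.b⁆⁆)
    (by left; rfl)
  simpa [map_commutatorElement, Va, Vb, PresentedGroup.of] using this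

lemma Vrel2 : ⁅Vb, ⁅Va, Vb⁆⁆ = 1 := by
  have := presented_rel (rels := VRels)
    (r := ⁅FreeGroup.of VGen.b, ⁅FreeGroup.of VGen.a, FreeGroup.of VGen.b⁆⁆)
    (by right; left; rfl)
  simpa [map_commutatorElement, Va, Vb, PresentedGroup.of] using this

/-! ### The homomorphism `ψ : VH →* G` -/

def uu : Multiplicative (ZMod 2) := Multiplicative.ofAdd 1

@[simp] lemma phi_uu : phi uu = K.tau := phi_uu'

def fV : VGen → G
  | .a => SemidirectProduct.inl K.A
  | .b => SemidirectProduct.inl K.B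
  | .t => SemidirectProduct.inr uu

lemma fV_rels : ∀ r ∈ VRels, FreeGroup.lift fV r = 1 := by
  intro r hr
  simp only [VRels, Set.mem_insert_iff, Set.mem_singleton_iff] at hr
  rcases hr with rfl | rfl | rfl | rfl
  · rw [map_commutatorElement, map_commutatorElement, FreeGroup.lift_apply_of, FreeGroup.lift_apply_of]
    show ⁅SemidirectProduct.inl (φ := phi) K.A,
      ⁅SemidirectProduct.inl (φ := phi) K.A, SemidirectProduct.inl K.B⁆⁆ = 1
    rw [← map_commutatorElement, ← map_commutatorElement, K.rel1, map_one]
  · rw [map_commutatorElement, map_commutatorElement, FreeGroup.lift_apply_of, FreeGroup.lift_apply_of]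
    show ⁅SemidirectProduct.inl (φ := phi) K.B,
      ⁅SemidirectProduct.inl (φ := phi) K.A, SemidirectProduct.inl K.B⁆⁆ = 1
    rw [← map_commutatorElement, ← map_commutatorElement, K.rel2, map_one]
  · rw [map_pow, FreeGroup.lift_apply_of]
    show SemidirectProduct.inr uu ^ 2 = 1
    rw [← map_pow]
    have : uu ^ 2 = 1 := by decide
    rw [this, map_one]
  · simp only [map_mul, map_inv, FreeGroup.lift_apply_of]
    show SemidirectProduct.inr uu * SemidirectProduct.inl K.A * SemidirectProduct.inr uu *
      (SemidirectProduct.inl K.B)⁻¹ = 1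
    rw [mul_inv_eq_one]
    apply SemidirectProduct.ext
    · simp only [SemidirectProduct.mul_left, SemidirectProduct.mul_right,
        SemidirectProduct.left_inl, SemidirectProduct.right_inl, SemidirectProduct.left_inr,
        SemidirectProduct.right_inr, phi_uu, K.tau_A, map_one, one_mul, mul_one]
    · simp only [SemidirectProduct.mul_right, SemidirectProduct.right_inl,
        SemidirectProduct.right_inr, SemidirectProduct.left_inl, mul_one]
      show uu * 1 * uu = 1
      decide

noncomputable def psi : VH →* G := PresentedGroup.toGroup fV_rels

@[simp] lemma psi_a : psi Va = SemidirectProduct.inl K.A := PresentedGroup.toGroup.of fV_rels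
@[simp] lemma psi_b : psi Vb = SemidirectProduct.inl K.B := PresentedGroup.toGroup.of fV_rels
@[simp] lemma psi_t : psi Vt = SemidirectProduct.inr uu := PresentedGroup.toGroup.of fV_rels

/-! ### The homomorphism `Φ : Heis →* VH` -/

def fP : HGen → VH
  | .a => Va
  | .b => Vb

lemma fP_rels : ∀ r ∈ Hrels, FreeGroup.lift fP r = 1 := by
  intro r hr
  simp only [Hrels, Set.mem_insert_iff, Set.mem_singleton_iff] at hr
  rcases hr with rfl | rfl <;>
    simp [map_commutatorElement, fP, Vrel1, Vrel2]

noncomputable def Phi : Heis →* VH := PresentedGroup.toGroup fP_rels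

@[simp] lemma Phi_a : Phi Ha = Va := PresentedGroup.toGroup.of fP_rels
@[simp] lemma Phi_b : Phi Hb = Vb := PresentedGroup.toGroup.of fP_rels

lemma psi_comp_Phi :
    psi.comp Phi = (SemidirectProduct.inl (φ := phi)).comp theta := by
  apply PresentedGroup.ext
  intro x
  simp only [MonoidHom.comp_apply]
  cases x
  · rw [show (PresentedGroup.of HGen.a : Heis) = Ha from rfl, Phi_a, psi_a, theta_a]
  · rw [show (PresentedGroup.of HGen.b : Heis) = Hb from rfl, Phi_b, psi_b, theta_b]

lemma Phi_inj : Function.Injective Phi := by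
  intro g g' h
  have h2 : (psi.comp Phi) g = (psi.comp Phi) g' := by
    simp [MonoidHom.comp_apply, h]
  rw [psi_comp_Phi] at h2
  simp only [MonoidHom.comp_apply] at h2
  exact theta_inj (SemidirectProduct.inl_injective h2)

lemma range_of_V : (Set.range (PresentedGroup.of : HGen → Heis)) = {Ha, Hb} := by
  ext g
  constructor
  · rintro ⟨u, rfl⟩
    cases u
    · exact Or.inl rfl
    · exact Or.inr rfl
  · rintro (rfl | rfl)
    exacts [⟨HGen.a, rfl⟩, ⟨HGen.b, rfl⟩]

lemma Phi_range : Phi.range = Subgroup.closure ({Va, Vb} : Set VH) := by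
  rw [MonoidHom.range_eq_map, ← PresentedGroup.closure_range_of Hrels,
    MonoidHom.map_closure, range_of_V]
  congr 1
  rw [Set.image_insert_eq, Set.image_singleton, Phi_a, Phi_b]

/-! ### The homomorphism `χ : VH →* Multiplicative (ZMod 2)` -/

def fX : VGen → Multiplicative (ZMod 2)
  | .a => 1
  | .b => 1
  | .t => uu

lemma fX_rels : ∀ r ∈ VRels, FreeGroup.lift fX r = 1 := by
  intro r hr
  simp only [VRels, Set.mem_insert_iff, Set.mem_singleton_iff] at hr
  rcases hr with rfl | rfl | rfl | rfl
  · rw [map_commutatorElement, map_commutatorElement, FreeGroup.lift_apply_of, FreeGroup.lift_apply_of]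
    show ⁅fX VGen.a, ⁅fX VGen.a, fX VGen.b⁆⁆ = 1
    decide
  · rw [map_commutatorElement, map_commutatorElement, FreeGroup.lift_apply_of, FreeGroup.lift_apply_of]
    show ⁅fX VGen.b, ⁅fX VGen.a, fX VGen.b⁆⁆ = 1
    decide
  · rw [map_pow, FreeGroup.lift_apply_of]
    show fX VGen.t ^ 2 = 1
    decide
  · rw [map_mul, map_mul, map_mul, map_inv, FreeGroup.lift_apply_of, FreeGroup.lift_apply_of, FreeGroup.lift_apply_of]
    show fX VGen.t * fX VGen.a * fX VGen.t * (fX VGen.b)⁻¹ = 1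
    decide

noncomputable def chi : VH →* Multiplicative (ZMod 2) := PresentedGroup.toGroup fX_rels

@[simp] lemma chi_a : chi Va = 1 := PresentedGroup.toGroup.of fX_rels
@[simp] lemma chi_b : chi Vb = 1 := PresentedGroup.toGroup.of fX_rels
@[simp] lemma chi_t : chi Vt = uu := PresentedGroup.toGroup.of fX_rels

/-! ### The subgroup `N` -/

noncomputable abbrev N : Subgroup VH := Subgroup.closure ({Va, Vb} : Set VH)

lemma N_le_ker : N ≤ chi.ker := by
  rw [Subgroup.closure_le]
  rintro g (rfl | rfl) <;> simp [MonoidHom.mem_ker, SetLike.mem_coe]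

lemma Vt_not_mem : Vt ∉ N := by
  intro h
  have h2 := N_le_ker h
  rw [MonoidHom.mem_ker, chi_t] at h2
  exact absurd h2 (by decide)

lemma conj_mem {n : VH} (hn : n ∈ N) : Vt * n * Vt ∈ N := by
  refine Subgroup.closure_induction ?_ ?_ ?_ ?_ hn
  · rintro x (rfl | rfl)
    · rw [Vtat]; exact Subgroup.subset_closure (Or.inr rfl)
    · rw [Vtbt]; exact Subgroup.subset_closure (Or.inl rfl)
  · rw [mul_one, Vt_sq]; exact one_mem N
  · intro x y _ _ hx hy
    have : Vt * (x * y) * Vt = (Vt * x * Vt) * (Vt * y * Vt) := by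
      calc Vt * (x * y) * Vt = Vt * x * (Vt * Vt) * y * Vt := by rw [Vt_sq]; group
        _ = (Vt * x * Vt) * (Vt * y * Vt) := by group
    rw [this]; exact mul_mem hx hy
  · intro x _ hx
    have : Vt * x⁻¹ * Vt = (Vt * x * Vt)⁻¹ := by rw [mul_inv_rev, mul_inv_rev, Vt_inv]; group
    rw [this]; exact inv_mem hx

lemma dichotomy (g : VH) : g ∈ N ∨ g * Vt ∈ N := by
  have hg : g ∈ Subgroup.closure (Set.range (PresentedGroup.of : VGen → VH)) := by
    rw [PresentedGroup.closure_range_of]; trivial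
  refine Subgroup.closure_induction (p := fun g _ => g ∈ N ∨ g * Vt ∈ N) ?_ ?_ ?_ ?_ hg
  · rintro x ⟨u, rfl⟩
    cases u
    · exact Or.inl (Subgroup.subset_closure (Or.inl rfl))
    · exact Or.inl (Subgroup.subset_closure (Or.inr rfl))
    · refine Or.inr ?_
      show Vt * Vt ∈ N
      rw [Vt_sq]; exact one_mem N
  · exact Or.inl (one_mem N)
  · intro x y _ _ hx hy
    rcases hx with hx | hx <;> rcases hy with hy | hy
    · exact Or.inl (mul_mem hx hy)
    · refine Or.inr ?_
      rw [mul_assoc]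
      exact mul_mem hx hy
    · refine Or.inr ?_
      have : x * y * Vt = (x * Vt) * (Vt * y * Vt) := by
        calc x * y * Vt = x * (Vt * Vt) * y * Vt := by rw [Vt_sq]; group
          _ = (x * Vt) * (Vt * y * Vt) := by group
      rw [this]; exact mul_mem hx (conj_mem hy)
    · refine Or.inl ?_
      have : x * y = (x * Vt) * (Vt * (y * Vt) * Vt) := by
        calc x * y = x * (Vt * Vt) * y * (Vt * Vt) := by rw [Vt_sq]; group
          _ = (x * Vt) * (Vt * (y * Vt) * Vt) := by group
      rw [this]
      exact mul_mem hx (conj_mem hy)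
  · intro x _ hx
    rcases hx with hx | hx
    · exact Or.inl (inv_mem hx)
    · refine Or.inr ?_
      have : x⁻¹ * Vt = Vt * (x * Vt)⁻¹ * Vt := by
        rw [mul_inv_rev, Vt_inv]
        calc x⁻¹ * Vt = (Vt * Vt) * x⁻¹ * Vt := by rw [Vt_sq]; group
          _ = Vt * (Vt * x⁻¹) * Vt := by group
      rw [this]
      exact conj_mem (inv_mem hx)

end VHAux

/-- In `Ĥ`, the subgroup generated by `{a, b}` is isomorphic to the
discrete Heisenberg group `𝓗 = ⟨a,b ∣ [a,[a,b]] = [b,[a,b]] = 1⟩` and has index 2. -/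
theorem vh_heisenberg_subgroup_index_two :
    Nonempty ((Subgroup.closure ({Va, Vb} : Set VH)) ≃* Heis) ∧
    (Subgroup.closure ({Va, Vb} : Set VH)).index = 2 := by
  constructor
  · exact ⟨(MulEquiv.subgroupCongr VHAux.Phi_range.symm).trans
      (MonoidHom.ofInjective VHAux.Phi_inj).symm⟩
  · rw [Subgroup.index_eq_two_iff]
    refine ⟨Vt, fun b => ?_⟩
    rcases VHAux.dichotomy b with hb | hb
    · refine Or.inr ⟨hb, fun h => VHAux.Vt_not_mem ?_⟩
      have h2 := mul_mem (inv_mem hb) h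
      rwa [← mul_assoc, inv_mul_cancel, one_mul] at h2
    · refine Or.inl ⟨hb, fun h => VHAux.Vt_not_mem ?_⟩
      have h2 := mul_mem (inv_mem h) hb
      rwa [← mul_assoc, inv_mul_cancel, one_mul] at h2
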